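/- The net graph—the graph on six vertices consisting of a triangle with a pendant vertex attached to each triangle vertex—is a circular arc graph but not a proper circular arc graph; consequently, the complete signed graph whose positive subgraph is the net has no valid drawing in the circumference. -/

import Mathlib

open Real Set

noncomputable def cmod (x : ℝ) : ℝ := x - 2 * π * ⌊x / (2 * π)⌋

noncomputable def cdist (p q : ℝ) : ℝ := min (cmod (p - q)) (cmod (q - p))

def Mr (p : ℝ) : Set ℝ := {x | ∃ t, 0 ≤ t ∧ t ≤ π ∧ x = cmod (p + t)}
def Ml (p : ℝ) : Set ℝ := {x | ∃ t, 0 ≤ t ∧ t ≤ π ∧ x = cmod (p - t)}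

structure SignedGraph (V : Type*) where
  pos : SimpleGraph V
  neg : SimpleGraph V
  disjoint : ∀ i j, ¬ (pos.Adj i j ∧ neg.Adj i j)

def IsDrawing {V : Type*} (D : V → ℝ) : Prop :=
  Function.Injective D ∧ ∀ v, D v ∈ Set.Ico (0 : ℝ) (2 * π)

def IsValidDrawing {V : Type*} (G : SignedGraph V) (D : V → ℝ) : Prop :=
  IsDrawing D ∧ ∀ i j k, G.pos.Adj i j → G.neg.Adj i k →
    cdist (D i) (D j) < cdist (D i) (D k)

def IsAlmostValidDrawing {V : Type*} (G : SignedGraph V) (D : V → ℝ) : Prop :=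
  IsDrawing D ∧ ∃ δ > 0, ∀ i j k, G.pos.Adj i j → G.neg.Adj i k →
    cdist (D i) (D j) ≤ δ ∧ δ ≤ cdist (D i) (D k)

def arcC (s ℓ : ℝ) : Set ℝ := {x | x ∈ Set.Ico (0 : ℝ) (2 * π) ∧ cmod (x - s) ≤ ℓ}

def arcGen (s ℓ : ℝ) (inl inr : Bool) : Set ℝ :=
  {x | x ∈ Set.Ico (0 : ℝ) (2 * π) ∧
    (inl = false → 0 < cmod (x - s)) ∧
    (inr = true → cmod (x - s) ≤ ℓ) ∧ (inr = false → cmod (x - s) < ℓ)}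

def IsCircularArcModel {V : Type*} (G : SimpleGraph V) (A : V → Set ℝ) : Prop :=
  (∀ v, ∃ s ℓ, 0 < ℓ ∧ ℓ < 2 * π ∧ A v = arcC s ℓ) ∧
  ∀ i j, i ≠ j → (G.Adj i j ↔ (A i ∩ A j).Nonempty)

def IsCircularArcGraph {V : Type*} (G : SimpleGraph V) : Prop :=
  ∃ A, IsCircularArcModel G A

def IsProperCircularArcGraph {V : Type*} (G : SimpleGraph V) : Prop :=
  ∃ A : V → Set ℝ, IsCircularArcModel G A ∧ ∀ i j, ¬ A i ⊂ A j

/-- The net: a triangle a b c with pendant vertices a' b' c'. -/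
def netGraph : SimpleGraph (Fin 6) :=
  SimpleGraph.fromRel (fun i j =>
    ((i, j) : Fin 6 × Fin 6) ∈
      ([(0, 1), (1, 2), (2, 0), (0, 3), (1, 4), (2, 5)] : List (Fin 6 × Fin 6)))


/-! ### Auxiliary lemmas -/

section Aux
open Real Set

lemma cmod_eq_fract (x : ℝ) : cmod x = 2 * π * Int.fract (x / (2 * π)) := by
  unfold cmod Int.fract
  have h : (2:ℝ) * π ≠ 0 := ne_of_gt Real.two_pi_pos
  field_simp

lemma cmod_nonneg (x : ℝ) : 0 ≤ cmod x := by
  rw [cmod_eq_fract]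
  exact mul_nonneg (le_of_lt Real.two_pi_pos) (Int.fract_nonneg _)

lemma cmod_lt (x : ℝ) : cmod x < 2 * π := by
  rw [cmod_eq_fract]
  nlinarith [Int.fract_lt_one (x / (2*π)), Real.two_pi_pos]

lemma cmod_eq_self {x : ℝ} (h0 : 0 ≤ x) (h1 : x < 2 * π) : cmod x = x := by
  unfold cmod
  have h : ⌊x / (2*π)⌋ = 0 := by
    rw [Int.floor_eq_zero_iff]
    exact ⟨by positivity, (div_lt_one Real.two_pi_pos).mpr h1⟩
  rw [h]; simp

lemma cmod_neg_eq {x : ℝ} (h0 : -(2*π) ≤ x) (h1 : x < 0) : cmod x = x + 2 * π := by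
  unfold cmod
  have h : ⌊x / (2*π)⌋ = -1 := by
    have h2 := Real.two_pi_pos
    rw [Int.floor_eq_iff]
    push_cast
    constructor
    · rw [le_div_iff₀ h2]; linarith
    · rw [div_lt_iff₀ h2]; linarith
  rw [h]; push_cast; ring

lemma cmod_add_int (x : ℝ) (k : ℤ) : cmod (x + 2*π*k) = cmod x := by
  unfold cmod
  have h : (x + 2*π*k) / (2*π) = x/(2*π) + k := by
    field_simp
  rw [h, Int.floor_add_intCast]
  push_cast
  ring

lemma cmod_cmod_sub (a b : ℝ) : cmod (cmod a - b) = cmod (a - b) := by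
  have h : cmod a - b = (a - b) + 2*π*(-⌊a/(2*π)⌋ : ℤ) := by
    unfold cmod; push_cast; ring
  rw [h, cmod_add_int]

lemma cmod_sub_cmod (a b : ℝ) : cmod (a - cmod b) = cmod (a - b) := by
  have h : a - cmod b = (a - b) + 2*π*(⌊b/(2*π)⌋ : ℤ) := by
    unfold cmod; push_cast; ring
  rw [h, cmod_add_int]

lemma cmod_cmod_add (a b : ℝ) : cmod (cmod a + b) = cmod (a + b) := by
  have h : cmod a + b = (a + b) + 2*π*(-⌊a/(2*π)⌋ : ℤ) := by
    unfold cmod; push_cast; ring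
  rw [h, cmod_add_int]

lemma cmod_add_cmod (a b : ℝ) : cmod (a + cmod b) = cmod (a + b) := by
  have h : a + cmod b = (a + b) + 2*π*(-⌊b/(2*π)⌋ : ℤ) := by
    unfold cmod; push_cast; ring
  rw [h, cmod_add_int]

lemma cmod_sub_two_pi (x : ℝ) : cmod (x - 2*π) = cmod x := by
  rw [show x - 2*π = x + 2*π*((-1 : ℤ):ℝ) by push_cast; ring, cmod_add_int]

lemma cmod_zero : cmod 0 = 0 := cmod_eq_self le_rfl Real.two_pi_pos

lemma cmod_pos_of_ne {u v : ℝ} (hu0 : 0 ≤ u) (hu1 : u < 2*π) (hv0 : 0 ≤ v)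
    (hv1 : v < 2*π) (h : u ≠ v) : 0 < cmod (u - v) := by
  rcases lt_or_gt_of_ne h with hlt | hgt
  · rw [cmod_neg_eq (by linarith) (by linarith)]; linarith
  · rw [cmod_eq_self (by linarith) (by linarith)]; linarith

lemma cmod_sub_sub (U V P : ℝ) : cmod (U - V) = cmod (cmod (U - P) - cmod (V - P)) := by
  rw [cmod_cmod_sub, cmod_sub_cmod]
  congr 1
  ring

lemma coord_pos {U P : ℝ} (hU : U ∈ Ico 0 (2*π)) (hP : P ∈ Ico 0 (2*π)) (h : U ≠ P) :
    0 < cmod (U - P) := cmod_pos_of_ne hU.1 hU.2 hP.1 hP.2 h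

lemma coord_ne {U V : ℝ} (P : ℝ) (hU : U ∈ Ico 0 (2*π)) (hV : V ∈ Ico 0 (2*π)) (h : U ≠ V) :
    cmod (U - P) ≠ cmod (V - P) := by
  intro he
  have hpos := cmod_pos_of_ne hU.1 hU.2 hV.1 hV.2 h
  rw [cmod_sub_sub U V P, he, sub_self, cmod_zero] at hpos
  exact lt_irrefl _ hpos

lemma cdist_comm (p q : ℝ) : cdist p q = cdist q p := min_comm _ _

/-! ### The net graph: decidability of adjacency -/

instance : DecidableRel netGraph.Adj :=
  fun i j => decidable_of_iff _ (SimpleGraph.fromRel_adj _ i j).symm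

instance : DecidableRel (netGraphᶜ).Adj :=
  fun i j => inferInstanceAs (Decidable (i ≠ j ∧ ¬ netGraph.Adj i j))

/-! ### Part 1: the net is a circular arc graph -/

noncomputable def netS : Fin 6 → ℝ
  | 0 => 0
  | 1 => 2*π/3
  | 2 => 4*π/3
  | 3 => π/3
  | 4 => π
  | 5 => 5*π/3

noncomputable def netL : Fin 6 → ℝ
  | 0 => 5*π/6
  | 1 => 5*π/6
  | 2 => 5*π/6
  | 3 => π/6
  | 4 => π/6
  | 5 => π/6

noncomputable def netArcs : Fin 6 → Set ℝ := fun v => arcC (netS v) (netL v)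

lemma mem_arcC_of {x s ℓ : ℝ} (h1 : 0 ≤ x) (h2 : x < 2*π) (h3 : 0 ≤ x - s)
    (h4 : x - s < 2*π) (h5 : x - s ≤ ℓ) : x ∈ arcC s ℓ :=
  ⟨⟨h1, h2⟩, by rw [cmod_eq_self h3 h4]; exact h5⟩

lemma mem_arcC_of' {x s ℓ : ℝ} (h1 : 0 ≤ x) (h2 : x < 2*π) (h3 : -(2*π) ≤ x - s)
    (h4 : x - s < 0) (h5 : x - s + 2*π ≤ ℓ) : x ∈ arcC s ℓ :=
  ⟨⟨h1, h2⟩, by rw [cmod_neg_eq h3 h4]; exact h5⟩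

lemma arcC_bounds {x s ℓ : ℝ} (hs : 0 ≤ s) (hs2 : s < 2*π) (h : x ∈ arcC s ℓ) :
    (0 ≤ x ∧ x < 2*π) ∧ ((s ≤ x ∧ x - s ≤ ℓ) ∨ (x < s ∧ x + 2*π - s ≤ ℓ)) := by
  obtain ⟨⟨hx0, hx2⟩, hc⟩ := h
  refine ⟨⟨hx0, hx2⟩, ?_⟩
  rcases le_or_gt s x with hle | hlt
  · left
    refine ⟨hle, ?_⟩
    rwa [cmod_eq_self (by linarith) (by linarith)] at hc
  · right
    refine ⟨hlt, ?_⟩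
    rw [cmod_neg_eq (by linarith) (by linarith)] at hc
    linarith

lemma ne01 : (arcC 0 (5*π/6) ∩ arcC (2*π/3) (5*π/6)).Nonempty := by
  have hπ := Real.pi_pos
  exact ⟨3*π/4, mem_arcC_of (by linarith) (by linarith) (by linarith) (by linarith) (by linarith),
    mem_arcC_of (by linarith) (by linarith) (by linarith) (by linarith) (by linarith)⟩

lemma ne12 : (arcC (2*π/3) (5*π/6) ∩ arcC (4*π/3) (5*π/6)).Nonempty := by
  have hπ := Real.pi_pos
  exact ⟨17*π/12, mem_arcC_of (by linarith) (by linarith) (by linarith) (by linarith) (by linarith),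
    mem_arcC_of (by linarith) (by linarith) (by linarith) (by linarith) (by linarith)⟩

lemma ne02 : (arcC 0 (5*π/6) ∩ arcC (4*π/3) (5*π/6)).Nonempty := by
  have hπ := Real.pi_pos
  exact ⟨0, mem_arcC_of (by linarith) (by linarith) (by linarith) (by linarith) (by linarith),
    mem_arcC_of' (by linarith) (by linarith) (by linarith) (by linarith) (by linarith)⟩

lemma ne03 : (arcC 0 (5*π/6) ∩ arcC (π/3) (π/6)).Nonempty := by
  have hπ := Real.pi_pos
  exact ⟨π/3, mem_arcC_of (by linarith) (by linarith) (by linarith) (by linarith) (by linarith),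
    mem_arcC_of (by linarith) (by linarith) (by linarith) (by linarith) (by linarith)⟩

lemma ne14 : (arcC (2*π/3) (5*π/6) ∩ arcC π (π/6)).Nonempty := by
  have hπ := Real.pi_pos
  exact ⟨π, mem_arcC_of (by linarith) (by linarith) (by linarith) (by linarith) (by linarith),
    mem_arcC_of (by linarith) (by linarith) (by linarith) (by linarith) (by linarith)⟩

lemma ne25 : (arcC (4*π/3) (5*π/6) ∩ arcC (5*π/3) (π/6)).Nonempty := by
  have hπ := Real.pi_pos
  exact ⟨5*π/3, mem_arcC_of (by linarith) (by linarith) (by linarith) (by linarith) (by linarith),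
    mem_arcC_of (by linarith) (by linarith) (by linarith) (by linarith) (by linarith)⟩

lemma dis04 : ∀ z, z ∈ arcC (0) (5*π/6) → z ∈ arcC (π) (π/6) → False := by
  intro z h1 h2
  have hπ := Real.pi_pos
  obtain ⟨⟨hz0, hz2⟩, hb1⟩ := arcC_bounds (by linarith) (by linarith) h1
  obtain ⟨-, hb2⟩ := arcC_bounds (by linarith) (by linarith) h2
  rcases hb1 with ⟨h, h'⟩ | ⟨h, h'⟩ <;> rcases hb2 with ⟨g, g'⟩ | ⟨g, g'⟩ <;> linarith

lemma dis05 : ∀ z, z ∈ arcC (0) (5*π/6) → z ∈ arcC (5*π/3) (π/6) → False := by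
  intro z h1 h2
  have hπ := Real.pi_pos
  obtain ⟨⟨hz0, hz2⟩, hb1⟩ := arcC_bounds (by linarith) (by linarith) h1
  obtain ⟨-, hb2⟩ := arcC_bounds (by linarith) (by linarith) h2
  rcases hb1 with ⟨h, h'⟩ | ⟨h, h'⟩ <;> rcases hb2 with ⟨g, g'⟩ | ⟨g, g'⟩ <;> linarith

lemma dis13 : ∀ z, z ∈ arcC (2*π/3) (5*π/6) → z ∈ arcC (π/3) (π/6) → False := by
  intro z h1 h2
  have hπ := Real.pi_pos
  obtain ⟨⟨hz0, hz2⟩, hb1⟩ := arcC_bounds (by linarith) (by linarith) h1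
  obtain ⟨-, hb2⟩ := arcC_bounds (by linarith) (by linarith) h2
  rcases hb1 with ⟨h, h'⟩ | ⟨h, h'⟩ <;> rcases hb2 with ⟨g, g'⟩ | ⟨g, g'⟩ <;> linarith

lemma dis15 : ∀ z, z ∈ arcC (2*π/3) (5*π/6) → z ∈ arcC (5*π/3) (π/6) → False := by
  intro z h1 h2
  have hπ := Real.pi_pos
  obtain ⟨⟨hz0, hz2⟩, hb1⟩ := arcC_bounds (by linarith) (by linarith) h1
  obtain ⟨-, hb2⟩ := arcC_bounds (by linarith) (by linarith) h2
  rcases hb1 with ⟨h, h'⟩ | ⟨h, h'⟩ <;> rcases hb2 with ⟨g, g'⟩ | ⟨g, g'⟩ <;> linarith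

lemma dis23 : ∀ z, z ∈ arcC (4*π/3) (5*π/6) → z ∈ arcC (π/3) (π/6) → False := by
  intro z h1 h2
  have hπ := Real.pi_pos
  obtain ⟨⟨hz0, hz2⟩, hb1⟩ := arcC_bounds (by linarith) (by linarith) h1
  obtain ⟨-, hb2⟩ := arcC_bounds (by linarith) (by linarith) h2
  rcases hb1 with ⟨h, h'⟩ | ⟨h, h'⟩ <;> rcases hb2 with ⟨g, g'⟩ | ⟨g, g'⟩ <;> linarith

lemma dis24 : ∀ z, z ∈ arcC (4*π/3) (5*π/6) → z ∈ arcC (π) (π/6) → False := by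
  intro z h1 h2
  have hπ := Real.pi_pos
  obtain ⟨⟨hz0, hz2⟩, hb1⟩ := arcC_bounds (by linarith) (by linarith) h1
  obtain ⟨-, hb2⟩ := arcC_bounds (by linarith) (by linarith) h2
  rcases hb1 with ⟨h, h'⟩ | ⟨h, h'⟩ <;> rcases hb2 with ⟨g, g'⟩ | ⟨g, g'⟩ <;> linarith

lemma dis34 : ∀ z, z ∈ arcC (π/3) (π/6) → z ∈ arcC (π) (π/6) → False := by
  intro z h1 h2
  have hπ := Real.pi_pos
  obtain ⟨⟨hz0, hz2⟩, hb1⟩ := arcC_bounds (by linarith) (by linarith) h1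
  obtain ⟨-, hb2⟩ := arcC_bounds (by linarith) (by linarith) h2
  rcases hb1 with ⟨h, h'⟩ | ⟨h, h'⟩ <;> rcases hb2 with ⟨g, g'⟩ | ⟨g, g'⟩ <;> linarith

lemma dis35 : ∀ z, z ∈ arcC (π/3) (π/6) → z ∈ arcC (5*π/3) (π/6) → False := by
  intro z h1 h2
  have hπ := Real.pi_pos
  obtain ⟨⟨hz0, hz2⟩, hb1⟩ := arcC_bounds (by linarith) (by linarith) h1
  obtain ⟨-, hb2⟩ := arcC_bounds (by linarith) (by linarith) h2
  rcases hb1 with ⟨h, h'⟩ | ⟨h, h'⟩ <;> rcases hb2 with ⟨g, g'⟩ | ⟨g, g'⟩ <;> linarith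

lemma dis45 : ∀ z, z ∈ arcC (π) (π/6) → z ∈ arcC (5*π/3) (π/6) → False := by
  intro z h1 h2
  have hπ := Real.pi_pos
  obtain ⟨⟨hz0, hz2⟩, hb1⟩ := arcC_bounds (by linarith) (by linarith) h1
  obtain ⟨-, hb2⟩ := arcC_bounds (by linarith) (by linarith) h2
  rcases hb1 with ⟨h, h'⟩ | ⟨h, h'⟩ <;> rcases hb2 with ⟨g, g'⟩ | ⟨g, g'⟩ <;> linarith
lemma part1 : IsCircularArcGraph netGraph := by
  have hπ := Real.pi_pos
  refine ⟨netArcs, ⟨?_, ?_⟩⟩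
  · intro v
    fin_cases v
    · exact ⟨0, 5*π/6, by positivity, by linarith, rfl⟩
    · exact ⟨2*π/3, 5*π/6, by positivity, by linarith, rfl⟩
    · exact ⟨4*π/3, 5*π/6, by positivity, by linarith, rfl⟩
    · exact ⟨π/3, π/6, by positivity, by linarith, rfl⟩
    · exact ⟨π, π/6, by positivity, by linarith, rfl⟩
    · exact ⟨5*π/3, π/6, by positivity, by linarith, rfl⟩
  · intro i j hij
    fin_cases i <;> fin_cases j
    · exact absurd rfl hij
    · exact iff_of_true (by decide) ne01
    · exact iff_of_true (by decide) ne02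
    · exact iff_of_true (by decide) ne03
    · exact iff_of_false (by decide) (fun ⟨z, hz⟩ => dis04 z hz.1 hz.2)
    · exact iff_of_false (by decide) (fun ⟨z, hz⟩ => dis05 z hz.1 hz.2)
    · exact iff_of_true (by decide) (by rw [Set.inter_comm]; exact ne01)
    · exact absurd rfl hij
    · exact iff_of_true (by decide) ne12
    · exact iff_of_false (by decide) (fun ⟨z, hz⟩ => dis13 z hz.1 hz.2)
    · exact iff_of_true (by decide) ne14
    · exact iff_of_false (by decide) (fun ⟨z, hz⟩ => dis15 z hz.1 hz.2)
    · exact iff_of_true (by decide) (by rw [Set.inter_comm]; exact ne02)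
    · exact iff_of_true (by decide) (by rw [Set.inter_comm]; exact ne12)
    · exact absurd rfl hij
    · exact iff_of_false (by decide) (fun ⟨z, hz⟩ => dis23 z hz.1 hz.2)
    · exact iff_of_false (by decide) (fun ⟨z, hz⟩ => dis24 z hz.1 hz.2)
    · exact iff_of_true (by decide) ne25
    · exact iff_of_true (by decide) (by rw [Set.inter_comm]; exact ne03)
    · exact iff_of_false (by decide) (fun ⟨z, hz⟩ => dis13 z hz.2 hz.1)
    · exact iff_of_false (by decide) (fun ⟨z, hz⟩ => dis23 z hz.2 hz.1)
    · exact absurd rfl hij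
    · exact iff_of_false (by decide) (fun ⟨z, hz⟩ => dis34 z hz.1 hz.2)
    · exact iff_of_false (by decide) (fun ⟨z, hz⟩ => dis35 z hz.1 hz.2)
    · exact iff_of_false (by decide) (fun ⟨z, hz⟩ => dis04 z hz.2 hz.1)
    · exact iff_of_true (by decide) (by rw [Set.inter_comm]; exact ne14)
    · exact iff_of_false (by decide) (fun ⟨z, hz⟩ => dis24 z hz.2 hz.1)
    · exact iff_of_false (by decide) (fun ⟨z, hz⟩ => dis34 z hz.2 hz.1)
    · exact absurd rfl hij
    · exact iff_of_false (by decide) (fun ⟨z, hz⟩ => dis45 z hz.1 hz.2)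
    · exact iff_of_false (by decide) (fun ⟨z, hz⟩ => dis05 z hz.2 hz.1)
    · exact iff_of_false (by decide) (fun ⟨z, hz⟩ => dis15 z hz.2 hz.1)
    · exact iff_of_true (by decide) (by rw [Set.inter_comm]; exact ne25)
    · exact iff_of_false (by decide) (fun ⟨z, hz⟩ => dis35 z hz.2 hz.1)
    · exact iff_of_false (by decide) (fun ⟨z, hz⟩ => dis45 z hz.2 hz.1)
    · exact absurd rfl hij

/-! ### Part 2: the net is not a proper circular arc graph -/

lemma interval_of_arc {s ℓ x : ℝ} (hl : 0 < ℓ) (hl2 : ℓ < 2*π) (hxI : x ∈ Ico 0 (2*π))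
    (hxn : x ∉ arcC s ℓ) :
    ∃ lo hi, 0 < lo ∧ lo ≤ hi ∧ hi < 2*π ∧
      ∀ z, (z ∈ arcC s ℓ ↔ (z ∈ Ico 0 (2*π) ∧ lo ≤ cmod (z - x) ∧ cmod (z - x) ≤ hi)) := by
  have hπ := Real.pi_pos
  have hcl : ℓ < cmod (x - s) := by
    by_contra hcc
    push_neg at hcc
    exact hxn ⟨hxI, hcc⟩
  have hc2 : cmod (x - s) < 2*π := cmod_lt _
  have hc0 : 0 ≤ cmod (x - s) := cmod_nonneg _
  refine ⟨2*π - cmod (x - s), 2*π - cmod (x - s) + ℓ, by linarith, by linarith, by linarith, ?_⟩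
  intro z
  have key : cmod (cmod (z - x) + cmod (x - s)) = cmod (z - s) := by
    rw [cmod_cmod_add, cmod_add_cmod]
    congr 1
    ring
  have hw0 : 0 ≤ cmod (z - x) := cmod_nonneg _
  have hw2 : cmod (z - x) < 2*π := cmod_lt _
  constructor
  · rintro ⟨hzI, hzc⟩
    have hge : 2*π ≤ cmod (z - x) + cmod (x - s) := by
      by_contra hcc
      push_neg at hcc
      have : cmod (z - x) + cmod (x - s) ≤ ℓ := by
        rw [← cmod_eq_self (by linarith) hcc, key]
        exact hzc
      linarith
    have e : cmod (cmod (z - x) + cmod (x - s)) = cmod (z - x) + cmod (x - s) - 2*π := by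
      rw [← cmod_sub_two_pi (cmod (z - x) + cmod (x - s))]
      exact cmod_eq_self (by linarith) (by linarith)
    rw [e] at key
    refine ⟨hzI, by linarith, by linarith⟩
  · rintro ⟨hzI, hwlo, hwhi⟩
    refine ⟨hzI, ?_⟩
    have e : cmod (cmod (z - x) + cmod (x - s)) = cmod (z - x) + cmod (x - s) - 2*π := by
      rw [← cmod_sub_two_pi (cmod (z - x) + cmod (x - s))]
      exact cmod_eq_self (by linarith) (by linarith)
    rw [e] at key
    linarith [key]

lemma ends_of_arc {s ℓ x : ℝ} (hl2 : ℓ < 2*π) (hx : x ∈ arcC s ℓ) :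
    ∃ h1 l2, 0 ≤ h1 ∧ h1 < l2 ∧
      ∀ z, (z ∈ arcC s ℓ ↔ (z ∈ Ico 0 (2*π) ∧ (cmod (z - x) ≤ h1 ∨ l2 ≤ cmod (z - x)))) := by
  have hπ := Real.pi_pos
  obtain ⟨hxI, hxc⟩ := hx
  have hc2 : cmod (x - s) < 2*π := cmod_lt _
  have hc0 : 0 ≤ cmod (x - s) := cmod_nonneg _
  refine ⟨ℓ - cmod (x - s), 2*π - cmod (x - s), by linarith, by linarith, ?_⟩
  intro z
  have key : cmod (cmod (z - x) + cmod (x - s)) = cmod (z - s) := by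
    rw [cmod_cmod_add, cmod_add_cmod]
    congr 1
    ring
  have hw0 : 0 ≤ cmod (z - x) := cmod_nonneg _
  have hw2 : cmod (z - x) < 2*π := cmod_lt _
  constructor
  · rintro ⟨hzI, hzc⟩
    refine ⟨hzI, ?_⟩
    rcases lt_or_ge (cmod (z - x) + cmod (x - s)) (2*π) with hlt | hge
    · left
      have : cmod (z - x) + cmod (x - s) ≤ ℓ := by
        rw [← cmod_eq_self (by linarith) hlt, key]
        exact hzc
      linarith
    · right
      linarith
  · rintro ⟨hzI, hor⟩
    refine ⟨hzI, ?_⟩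
    rcases hor with h | h
    · rw [← key, cmod_eq_self (by linarith) (by linarith)]
      linarith
    · have e : cmod (cmod (z - x) + cmod (x - s)) = cmod (z - x) + cmod (x - s) - 2*π := by
        rw [← cmod_sub_two_pi (cmod (z - x) + cmod (x - s))]
        exact cmod_eq_self (by linarith) (by linarith)
      rw [e] at key
      rw [← key]
      linarith

lemma cmod_point {x m : ℝ} (h0 : 0 ≤ m) (h2 : m < 2*π) :
    cmod (x + m) ∈ Ico 0 (2*π) ∧ cmod (cmod (x + m) - x) = m := by
  refine ⟨⟨cmod_nonneg _, cmod_lt _⟩, ?_⟩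
  rw [cmod_cmod_sub, show x + m - x = m by ring, cmod_eq_self h0 h2]

lemma part2 : ¬ IsProperCircularArcGraph netGraph := by
  rintro ⟨A, ⟨harcs, hadj⟩, hproper⟩
  have hπ := Real.pi_pos
  obtain ⟨s0, l0, hl0, hl0', hA0⟩ := harcs 0
  obtain ⟨s1, l1, hl1, hl1', hA1⟩ := harcs 1
  obtain ⟨s2, l2, hl2, hl2', hA2⟩ := harcs 2
  obtain ⟨s3, l3, hl3, hl3', hA3⟩ := harcs 3
  obtain ⟨s4, l4, hl4, hl4', hA4⟩ := harcs 4
  obtain ⟨s5, l5, hl5, hl5', hA5⟩ := harcs 5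
  have h01 : (A 0 ∩ A 1).Nonempty := (hadj 0 1 (by decide)).mp (by decide)
  have h02 : (A 0 ∩ A 2).Nonempty := (hadj 0 2 (by decide)).mp (by decide)
  have h12 : (A 1 ∩ A 2).Nonempty := (hadj 1 2 (by decide)).mp (by decide)
  have h03 : (A 0 ∩ A 3).Nonempty := (hadj 0 3 (by decide)).mp (by decide)
  have h14 : (A 1 ∩ A 4).Nonempty := (hadj 1 4 (by decide)).mp (by decide)
  have h25 : (A 2 ∩ A 5).Nonempty := (hadj 2 5 (by decide)).mp (by decide)
  have n04 : ¬ (A 0 ∩ A 4).Nonempty := fun h => (by decide : ¬ netGraph.Adj 0 4) ((hadj 0 4 (by decide)).mpr h)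
  have n05 : ¬ (A 0 ∩ A 5).Nonempty := fun h => (by decide : ¬ netGraph.Adj 0 5) ((hadj 0 5 (by decide)).mpr h)
  have n13 : ¬ (A 1 ∩ A 3).Nonempty := fun h => (by decide : ¬ netGraph.Adj 1 3) ((hadj 1 3 (by decide)).mpr h)
  have n15 : ¬ (A 1 ∩ A 5).Nonempty := fun h => (by decide : ¬ netGraph.Adj 1 5) ((hadj 1 5 (by decide)).mpr h)
  have n23 : ¬ (A 2 ∩ A 3).Nonempty := fun h => (by decide : ¬ netGraph.Adj 2 3) ((hadj 2 3 (by decide)).mpr h)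
  have n24 : ¬ (A 2 ∩ A 4).Nonempty := fun h => (by decide : ¬ netGraph.Adj 2 4) ((hadj 2 4 (by decide)).mpr h)
  have n34 : ¬ (A 3 ∩ A 4).Nonempty := fun h => (by decide : ¬ netGraph.Adj 3 4) ((hadj 3 4 (by decide)).mpr h)
  have n35 : ¬ (A 3 ∩ A 5).Nonempty := fun h => (by decide : ¬ netGraph.Adj 3 5) ((hadj 3 5 (by decide)).mpr h)
  have n45 : ¬ (A 4 ∩ A 5).Nonempty := fun h => (by decide : ¬ netGraph.Adj 4 5) ((hadj 4 5 (by decide)).mpr h)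
  have hne : ¬ A 3 ⊆ A 0 := by
    intro hsub
    have hEq : A 3 ≠ A 0 := by
      intro he
      obtain ⟨z, hz1, hz2⟩ := h01
      exact n13 ⟨z, hz2, he ▸ hz1⟩
    exact hproper 3 0 (ssubset_of_subset_of_ne hsub hEq)
  obtain ⟨x, hx3, hx0⟩ := Set.not_subset.mp hne
  have hxI : x ∈ Ico 0 (2*π) := by
    rw [hA3] at hx3
    exact hx3.1
  have hx1 : x ∉ A 1 := fun h => n13 ⟨x, h, hx3⟩
  have hx2 : x ∉ A 2 := fun h => n23 ⟨x, h, hx3⟩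
  have hx4 : x ∉ A 4 := fun h => n34 ⟨x, hx3, h⟩
  have hx5 : x ∉ A 5 := fun h => n35 ⟨x, hx3, h⟩
  obtain ⟨lo0, hi0, hlo0, hlh0, hhi0, hI0⟩ := interval_of_arc hl0 hl0' hxI (by rw [hA0] at hx0; exact hx0)
  have hJ0 : ∀ z, z ∈ A 0 ↔ (z ∈ Ico 0 (2*π) ∧ lo0 ≤ cmod (z - x) ∧ cmod (z - x) ≤ hi0) := by
    rw [hA0]
    exact hI0
  obtain ⟨lo1, hi1, hlo1, hlh1, hhi1, hI1⟩ := interval_of_arc hl1 hl1' hxI (by rw [hA1] at hx1; exact hx1)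
  have hJ1 : ∀ z, z ∈ A 1 ↔ (z ∈ Ico 0 (2*π) ∧ lo1 ≤ cmod (z - x) ∧ cmod (z - x) ≤ hi1) := by
    rw [hA1]
    exact hI1
  obtain ⟨lo2, hi2, hlo2, hlh2, hhi2, hI2⟩ := interval_of_arc hl2 hl2' hxI (by rw [hA2] at hx2; exact hx2)
  have hJ2 : ∀ z, z ∈ A 2 ↔ (z ∈ Ico 0 (2*π) ∧ lo2 ≤ cmod (z - x) ∧ cmod (z - x) ≤ hi2) := by
    rw [hA2]
    exact hI2
  obtain ⟨lo4, hi4, hlo4, hlh4, hhi4, hI4⟩ := interval_of_arc hl4 hl4' hxI (by rw [hA4] at hx4; exact hx4)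
  have hJ4 : ∀ z, z ∈ A 4 ↔ (z ∈ Ico 0 (2*π) ∧ lo4 ≤ cmod (z - x) ∧ cmod (z - x) ≤ hi4) := by
    rw [hA4]
    exact hI4
  obtain ⟨lo5, hi5, hlo5, hlh5, hhi5, hI5⟩ := interval_of_arc hl5 hl5' hxI (by rw [hA5] at hx5; exact hx5)
  have hJ5 : ∀ z, z ∈ A 5 ↔ (z ∈ Ico 0 (2*π) ∧ lo5 ≤ cmod (z - x) ∧ cmod (z - x) ≤ hi5) := by
    rw [hA5]
    exact hI5
  obtain ⟨e3, f3, he3, hef3, hI3⟩ := ends_of_arc hl3' (by rw [hA3] at hx3; exact hx3)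
  have hJ3 : ∀ z, z ∈ A 3 ↔ (z ∈ Ico 0 (2*π) ∧ (cmod (z - x) ≤ e3 ∨ f3 ≤ cmod (z - x))) := by
    rw [hA3]
    exact hI3
  have plo1 : e3 < lo1 ∧ lo1 < f3 := by
    obtain ⟨hzI, hzv⟩ := cmod_point (le_of_lt hlo1) (lt_of_le_of_lt hlh1 hhi1)
    have hz1 : cmod (x + lo1) ∈ A 1 := (hJ1 _).mpr ⟨hzI, by rw [hzv], by rw [hzv]; exact hlh1⟩
    have hno : ¬ (cmod (cmod (x + lo1) - x) ≤ e3 ∨ f3 ≤ cmod (cmod (x + lo1) - x)) := by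
      intro hcc
      exact n13 ⟨cmod (x + lo1), hz1, (hJ3 _).mpr ⟨hzI, hcc⟩⟩
    push_neg at hno
    rw [hzv] at hno
    exact hno
  have phi1 : e3 < hi1 ∧ hi1 < f3 := by
    obtain ⟨hzI, hzv⟩ := cmod_point (le_trans (le_of_lt hlo1) hlh1) hhi1
    have hz1 : cmod (x + hi1) ∈ A 1 := (hJ1 _).mpr ⟨hzI, by rw [hzv]; exact hlh1, by rw [hzv]⟩
    have hno : ¬ (cmod (cmod (x + hi1) - x) ≤ e3 ∨ f3 ≤ cmod (cmod (x + hi1) - x)) := by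
      intro hcc
      exact n13 ⟨cmod (x + hi1), hz1, (hJ3 _).mpr ⟨hzI, hcc⟩⟩
    push_neg at hno
    rw [hzv] at hno
    exact hno
  have plo2 : e3 < lo2 ∧ lo2 < f3 := by
    obtain ⟨hzI, hzv⟩ := cmod_point (le_of_lt hlo2) (lt_of_le_of_lt hlh2 hhi2)
    have hz1 : cmod (x + lo2) ∈ A 2 := (hJ2 _).mpr ⟨hzI, by rw [hzv], by rw [hzv]; exact hlh2⟩
    have hno : ¬ (cmod (cmod (x + lo2) - x) ≤ e3 ∨ f3 ≤ cmod (cmod (x + lo2) - x)) := by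
      intro hcc
      exact n23 ⟨cmod (x + lo2), hz1, (hJ3 _).mpr ⟨hzI, hcc⟩⟩
    push_neg at hno
    rw [hzv] at hno
    exact hno
  have phi2 : e3 < hi2 ∧ hi2 < f3 := by
    obtain ⟨hzI, hzv⟩ := cmod_point (le_trans (le_of_lt hlo2) hlh2) hhi2
    have hz1 : cmod (x + hi2) ∈ A 2 := (hJ2 _).mpr ⟨hzI, by rw [hzv]; exact hlh2, by rw [hzv]⟩
    have hno : ¬ (cmod (cmod (x + hi2) - x) ≤ e3 ∨ f3 ≤ cmod (cmod (x + hi2) - x)) := by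
      intro hcc
      exact n23 ⟨cmod (x + hi2), hz1, (hJ3 _).mpr ⟨hzI, hcc⟩⟩
    push_neg at hno
    rw [hzv] at hno
    exact hno
  have plo4 : e3 < lo4 ∧ lo4 < f3 := by
    obtain ⟨hzI, hzv⟩ := cmod_point (le_of_lt hlo4) (lt_of_le_of_lt hlh4 hhi4)
    have hz1 : cmod (x + lo4) ∈ A 4 := (hJ4 _).mpr ⟨hzI, by rw [hzv], by rw [hzv]; exact hlh4⟩
    have hno : ¬ (cmod (cmod (x + lo4) - x) ≤ e3 ∨ f3 ≤ cmod (cmod (x + lo4) - x)) := by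
      intro hcc
      exact n34 ⟨cmod (x + lo4), (hJ3 _).mpr ⟨hzI, hcc⟩, hz1⟩
    push_neg at hno
    rw [hzv] at hno
    exact hno
  have phi4 : e3 < hi4 ∧ hi4 < f3 := by
    obtain ⟨hzI, hzv⟩ := cmod_point (le_trans (le_of_lt hlo4) hlh4) hhi4
    have hz1 : cmod (x + hi4) ∈ A 4 := (hJ4 _).mpr ⟨hzI, by rw [hzv]; exact hlh4, by rw [hzv]⟩
    have hno : ¬ (cmod (cmod (x + hi4) - x) ≤ e3 ∨ f3 ≤ cmod (cmod (x + hi4) - x)) := by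
      intro hcc
      exact n34 ⟨cmod (x + hi4), (hJ3 _).mpr ⟨hzI, hcc⟩, hz1⟩
    push_neg at hno
    rw [hzv] at hno
    exact hno
  have plo5 : e3 < lo5 ∧ lo5 < f3 := by
    obtain ⟨hzI, hzv⟩ := cmod_point (le_of_lt hlo5) (lt_of_le_of_lt hlh5 hhi5)
    have hz1 : cmod (x + lo5) ∈ A 5 := (hJ5 _).mpr ⟨hzI, by rw [hzv], by rw [hzv]; exact hlh5⟩
    have hno : ¬ (cmod (cmod (x + lo5) - x) ≤ e3 ∨ f3 ≤ cmod (cmod (x + lo5) - x)) := by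
      intro hcc
      exact n35 ⟨cmod (x + lo5), (hJ3 _).mpr ⟨hzI, hcc⟩, hz1⟩
    push_neg at hno
    rw [hzv] at hno
    exact hno
  have phi5 : e3 < hi5 ∧ hi5 < f3 := by
    obtain ⟨hzI, hzv⟩ := cmod_point (le_trans (le_of_lt hlo5) hlh5) hhi5
    have hz1 : cmod (x + hi5) ∈ A 5 := (hJ5 _).mpr ⟨hzI, by rw [hzv]; exact hlh5, by rw [hzv]⟩
    have hno : ¬ (cmod (cmod (x + hi5) - x) ≤ e3 ∨ f3 ≤ cmod (cmod (x + hi5) - x)) := by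
      intro hcc
      exact n35 ⟨cmod (x + hi5), (hJ3 _).mpr ⟨hzI, hcc⟩, hz1⟩
    push_neg at hno
    rw [hzv] at hno
    exact hno
  obtain ⟨ym01, hym01a, hym01b⟩ := h01
  have gm01a := (hJ0 _).mp hym01a
  have gm01b := (hJ1 _).mp hym01b
  obtain ⟨ym02, hym02a, hym02b⟩ := h02
  have gm02a := (hJ0 _).mp hym02a
  have gm02b := (hJ2 _).mp hym02b
  obtain ⟨ym14, hym14a, hym14b⟩ := h14
  have gm14a := (hJ1 _).mp hym14a
  have gm14b := (hJ4 _).mp hym14b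
  obtain ⟨ym25, hym25a, hym25b⟩ := h25
  have gm25a := (hJ2 _).mp hym25a
  have gm25b := (hJ5 _).mp hym25b
  obtain ⟨y3, hy3a, hy3b⟩ := h03
  have g3a := (hJ0 _).mp hy3a
  have g3b := (hJ3 _).mp hy3b
  have d04 : hi0 < lo4 ∨ hi4 < lo0 := by
    by_contra hcc
    push_neg at hcc
    obtain ⟨hzI, hzv⟩ := cmod_point (le_trans (le_of_lt hlo0) (le_max_left lo0 lo4))
      (max_lt (lt_of_le_of_lt hlh0 hhi0) (lt_of_le_of_lt hlh4 hhi4))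
    refine n04 ⟨cmod (x + max lo0 lo4), (hJ0 _).mpr ⟨hzI, ?_, ?_⟩, (hJ4 _).mpr ⟨hzI, ?_, ?_⟩⟩ <;> rw [hzv]
    · exact le_max_left _ _
    · exact max_le hlh0 hcc.1
    · exact le_max_right _ _
    · exact max_le hcc.2 hlh4
  have d05 : hi0 < lo5 ∨ hi5 < lo0 := by
    by_contra hcc
    push_neg at hcc
    obtain ⟨hzI, hzv⟩ := cmod_point (le_trans (le_of_lt hlo0) (le_max_left lo0 lo5))
      (max_lt (lt_of_le_of_lt hlh0 hhi0) (lt_of_le_of_lt hlh5 hhi5))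
    refine n05 ⟨cmod (x + max lo0 lo5), (hJ0 _).mpr ⟨hzI, ?_, ?_⟩, (hJ5 _).mpr ⟨hzI, ?_, ?_⟩⟩ <;> rw [hzv]
    · exact le_max_left _ _
    · exact max_le hlh0 hcc.1
    · exact le_max_right _ _
    · exact max_le hcc.2 hlh5
  have d15 : hi1 < lo5 ∨ hi5 < lo1 := by
    by_contra hcc
    push_neg at hcc
    obtain ⟨hzI, hzv⟩ := cmod_point (le_trans (le_of_lt hlo1) (le_max_left lo1 lo5))
      (max_lt (lt_of_le_of_lt hlh1 hhi1) (lt_of_le_of_lt hlh5 hhi5))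
    refine n15 ⟨cmod (x + max lo1 lo5), (hJ1 _).mpr ⟨hzI, ?_, ?_⟩, (hJ5 _).mpr ⟨hzI, ?_, ?_⟩⟩ <;> rw [hzv]
    · exact le_max_left _ _
    · exact max_le hlh1 hcc.1
    · exact le_max_right _ _
    · exact max_le hcc.2 hlh5
  have d24 : hi2 < lo4 ∨ hi4 < lo2 := by
    by_contra hcc
    push_neg at hcc
    obtain ⟨hzI, hzv⟩ := cmod_point (le_trans (le_of_lt hlo2) (le_max_left lo2 lo4))
      (max_lt (lt_of_le_of_lt hlh2 hhi2) (lt_of_le_of_lt hlh4 hhi4))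
    refine n24 ⟨cmod (x + max lo2 lo4), (hJ2 _).mpr ⟨hzI, ?_, ?_⟩, (hJ4 _).mpr ⟨hzI, ?_, ?_⟩⟩ <;> rw [hzv]
    · exact le_max_left _ _
    · exact max_le hlh2 hcc.1
    · exact le_max_right _ _
    · exact max_le hcc.2 hlh4
  have d45 : hi4 < lo5 ∨ hi5 < lo4 := by
    by_contra hcc
    push_neg at hcc
    obtain ⟨hzI, hzv⟩ := cmod_point (le_trans (le_of_lt hlo4) (le_max_left lo4 lo5))
      (max_lt (lt_of_le_of_lt hlh4 hhi4) (lt_of_le_of_lt hlh5 hhi5))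
    refine n45 ⟨cmod (x + max lo4 lo5), (hJ4 _).mpr ⟨hzI, ?_, ?_⟩, (hJ5 _).mpr ⟨hzI, ?_, ?_⟩⟩ <;> rw [hzv]
    · exact le_max_left _ _
    · exact max_le hlh4 hcc.1
    · exact le_max_right _ _
    · exact max_le hcc.2 hlh5
  rcases g3b.2 with hy | hy <;>
    rcases d04 with h04' | h04' <;>
      rcases d05 with h05' | h05' <;>
        rcases d45 with h45' | h45' <;>
          rcases d15 with h15' | h15' <;>
            rcases d24 with h24' | h24' <;>
              linarith [g3a.2.1, g3a.2.2, gm01a.2.1, gm01a.2.2, gm01b.2.1, gm01b.2.2,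
                gm02a.2.1, gm02a.2.2, gm02b.2.1, gm02b.2.2, gm14a.2.1, gm14a.2.2,
                gm14b.2.1, gm14b.2.2, gm25a.2.1, gm25a.2.2, gm25b.2.1, gm25b.2.2,
                plo1.1, plo1.2, phi1.1, phi1.2, plo2.1, plo2.2, phi2.1, phi2.2,
                plo4.1, plo4.2, phi4.1, phi4.2, plo5.1, plo5.2, phi5.1, phi5.2]

/-! ### Part 3: no valid drawing -/

lemma net_sep_aux {A B P Q : ℝ} (hA : A ∈ Ico 0 (2*π)) (hB : B ∈ Ico 0 (2*π))
    (hP : P ∈ Ico 0 (2*π)) (hQ : Q ∈ Ico 0 (2*π))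
    (hAP : A ≠ P) (hBP : B ≠ P)
    (h1 : cdist A B < cdist A P ∨ cdist A B < cdist B P)
    (h2 : cdist A B < cdist A Q ∨ cdist A B < cdist B Q)
    (hc1 : cmod (A - P) < cmod (Q - P)) (hc2 : cmod (Q - P) < cmod (B - P)) : False := by
  have hπ := Real.pi_pos
  have h1a := coord_pos hA hP hAP
  have h1b := coord_pos hB hP hBP
  have h2a := cmod_lt (A - P)
  have h2b := cmod_lt (B - P)
  have h2q := cmod_lt (Q - P)
  have hQA : cmod (Q - A) = cmod (Q - P) - cmod (A - P) := by
    rw [cmod_sub_sub Q A P, cmod_eq_self (by linarith) (by linarith)]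
  have hBQ2 : cmod (B - Q) = cmod (B - P) - cmod (Q - P) := by
    rw [cmod_sub_sub B Q P, cmod_eq_self (by linarith) (by linarith)]
  have hBA : cmod (B - A) = cmod (B - P) - cmod (A - P) := by
    rw [cmod_sub_sub B A P, cmod_eq_self (by linarith) (by linarith)]
  have hAB2 : cmod (A - B) = cmod (A - P) - cmod (B - P) + 2*π := by
    rw [cmod_sub_sub A B P, cmod_neg_eq (by linarith) (by linarith)]
  have hPB : cmod (P - B) = 2*π - cmod (B - P) := by
    rw [cmod_sub_sub P B P, sub_self, cmod_zero, zero_sub, cmod_neg_eq (by linarith) (by linarith)]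
    ring
  have c1 : cdist A Q ≤ cmod (Q - P) - cmod (A - P) :=
    le_of_le_of_eq (min_le_right (cmod (A - Q)) (cmod (Q - A))) hQA
  have c2 : cdist B Q ≤ cmod (B - P) - cmod (Q - P) :=
    le_of_le_of_eq (min_le_left (cmod (B - Q)) (cmod (Q - B))) hBQ2
  have c3 : cdist A P ≤ cmod (A - P) := min_le_left _ _
  have c4 : cdist B P ≤ 2*π - cmod (B - P) :=
    le_of_le_of_eq (min_le_right (cmod (B - P)) (cmod (P - B))) hPB
  have c5 : cdist A B = min (cmod (A - P) - cmod (B - P) + 2*π) (cmod (B - P) - cmod (A - P)) := by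
    unfold cdist
    rw [hAB2, hBA]
  rcases le_total (cmod (B - P) - cmod (A - P)) (cmod (A - P) - cmod (B - P) + 2*π) with hmin | hmin
  · have e : cdist A B = cmod (B - P) - cmod (A - P) := by rw [c5, min_eq_right hmin]
    rcases h2 with h | h <;> linarith
  · have e : cdist A B = cmod (A - P) - cmod (B - P) + 2*π := by rw [c5, min_eq_left hmin]
    rcases h1 with h | h <;> linarith

lemma net_sep {A B P Q : ℝ} (hA : A ∈ Ico 0 (2*π)) (hB : B ∈ Ico 0 (2*π))
    (hP : P ∈ Ico 0 (2*π)) (hQ : Q ∈ Ico 0 (2*π))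
    (hAP : A ≠ P) (hBP : B ≠ P) (hAQ : A ≠ Q) (hBQ : B ≠ Q)
    (h1 : cdist A B < cdist A P ∨ cdist A B < cdist B P)
    (h2 : cdist A B < cdist A Q ∨ cdist A B < cdist B Q) :
    (cmod (A - P) < cmod (Q - P) ↔ cmod (B - P) < cmod (Q - P)) := by
  constructor
  · intro h
    by_contra hc
    push_neg at hc
    exact net_sep_aux hA hB hP hQ hAP hBP h1 h2 h
      (lt_of_le_of_ne hc (coord_ne P hQ hB (Ne.symm hBQ)))
  · intro h
    by_contra hc
    push_neg at hc
    refine net_sep_aux hB hA hP hQ hBP hAP ?_ ?_ h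
      (lt_of_le_of_ne hc (coord_ne P hQ hA (Ne.symm hAQ)))
    · rw [cdist_comm B A]
      exact h1.symm
    · rw [cdist_comm B A]
      exact h2.symm

lemma net_four {X P Q R : ℝ} (hX : X ∈ Ico 0 (2*π)) (hP : P ∈ Ico 0 (2*π))
    (hQ : Q ∈ Ico 0 (2*π)) (hR : R ∈ Ico 0 (2*π))
    (hXP : X ≠ P) (hXQ : X ≠ Q) (hXR : X ≠ R) (hPQ : P ≠ Q) (hPR : P ≠ R) (hQR : Q ≠ R)
    (H1 : (cmod (X - Q) < cmod (R - Q) ↔ cmod (P - Q) < cmod (R - Q)))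
    (H2 : (cmod (X - P) < cmod (R - P) ↔ cmod (Q - P) < cmod (R - P)))
    (H3 : (cmod (X - P) < cmod (Q - P) ↔ cmod (R - P) < cmod (Q - P))) : False := by
  have hπ := Real.pi_pos
  have hx0 := coord_pos hX hP hXP
  have hq0 := coord_pos hQ hP (Ne.symm hPQ)
  have hr0 := coord_pos hR hP (Ne.symm hPR)
  have hx2 := cmod_lt (X - P)
  have hq2 := cmod_lt (Q - P)
  have hr2 := cmod_lt (R - P)
  have hxq := coord_ne P hX hQ hXQ
  have hxr := coord_ne P hX hR hXR
  have hqr := coord_ne P hQ hR hQR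
  have hPQ2 : cmod (P - Q) = 2*π - cmod (Q - P) := by
    rw [cmod_sub_sub P Q P, sub_self, cmod_zero, zero_sub, cmod_neg_eq (by linarith) (by linarith)]
    ring
  rcases lt_or_gt_of_ne hqr with h | h
  · have hxr' : cmod (X - P) < cmod (R - P) := H2.mpr h
    have hqx : cmod (Q - P) < cmod (X - P) := by
      have hle : ¬ (cmod (X - P) < cmod (Q - P)) := fun hc =>
        absurd (H3.mp hc) (not_lt.mpr h.le)
      exact lt_of_le_of_ne (not_lt.mp hle) (Ne.symm hxq)
    have e1 : cmod (X - Q) = cmod (X - P) - cmod (Q - P) := by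
      rw [cmod_sub_sub X Q P, cmod_eq_self (by linarith) (by linarith)]
    have e2 : cmod (R - Q) = cmod (R - P) - cmod (Q - P) := by
      rw [cmod_sub_sub R Q P, cmod_eq_self (by linarith) (by linarith)]
    have hf := H1.mp (by rw [e1, e2]; linarith)
    rw [hPQ2, e2] at hf
    linarith
  · have hxq' : cmod (X - P) < cmod (Q - P) := H3.mpr h
    have hrx : cmod (R - P) < cmod (X - P) := by
      have hle : ¬ (cmod (X - P) < cmod (R - P)) := fun hc =>
        absurd (H2.mp hc) (not_lt.mpr h.le)
      exact lt_of_le_of_ne (not_lt.mp hle) (Ne.symm hxr)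
    have e1 : cmod (X - Q) = cmod (X - P) - cmod (Q - P) + 2*π := by
      rw [cmod_sub_sub X Q P, cmod_neg_eq (by linarith) (by linarith)]
    have e2 : cmod (R - Q) = cmod (R - P) - cmod (Q - P) + 2*π := by
      rw [cmod_sub_sub R Q P, cmod_neg_eq (by linarith) (by linarith)]
    have hf := H1.mpr (by rw [hPQ2, e2]; linarith)
    rw [e1, e2] at hf
    linarith

lemma part3 : ¬ ∃ D : Fin 6 → ℝ,
    IsValidDrawing ⟨netGraph, netGraphᶜ, fun i j h => h.2.2 h.1⟩ D := by
  rintro ⟨D, ⟨hinj, hmem⟩, hval⟩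
  have hval' : ∀ i j k : Fin 6, netGraph.Adj i j → (netGraphᶜ).Adj i k →
      cdist (D i) (D j) < cdist (D i) (D k) := hval
  have hd : ∀ i j : Fin 6, i ≠ j → D i ≠ D j := fun i j hij h => hij (hinj h)
  have F1 := net_sep (hmem 0) (hmem 3) (hmem 4) (hmem 5)
    (hd 0 4 (by decide)) (hd 3 4 (by decide)) (hd 0 5 (by decide)) (hd 3 5 (by decide))
    (Or.inl (hval' 0 3 4 (by decide) (by decide)))
    (Or.inl (hval' 0 3 5 (by decide) (by decide)))
  have F2 := net_sep (hmem 0) (hmem 1) (hmem 3) (hmem 5)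
    (hd 0 3 (by decide)) (hd 1 3 (by decide)) (hd 0 5 (by decide)) (hd 1 5 (by decide))
    (Or.inr (by rw [cdist_comm]; exact hval' 1 0 3 (by decide) (by decide)))
    (Or.inl (hval' 0 1 5 (by decide) (by decide)))
  have F3 := net_sep (hmem 1) (hmem 4) (hmem 3) (hmem 5)
    (hd 1 3 (by decide)) (hd 4 3 (by decide)) (hd 1 5 (by decide)) (hd 4 5 (by decide))
    (Or.inl (hval' 1 4 3 (by decide) (by decide)))
    (Or.inl (hval' 1 4 5 (by decide) (by decide)))
  have F4 := net_sep (hmem 0) (hmem 2) (hmem 3) (hmem 4)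
    (hd 0 3 (by decide)) (hd 2 3 (by decide)) (hd 0 4 (by decide)) (hd 2 4 (by decide))
    (Or.inr (by rw [cdist_comm]; exact hval' 2 0 3 (by decide) (by decide)))
    (Or.inl (hval' 0 2 4 (by decide) (by decide)))
  have F5 := net_sep (hmem 2) (hmem 5) (hmem 3) (hmem 4)
    (hd 2 3 (by decide)) (hd 5 3 (by decide)) (hd 2 4 (by decide)) (hd 5 4 (by decide))
    (Or.inl (hval' 2 5 3 (by decide) (by decide)))
    (Or.inl (hval' 2 5 4 (by decide) (by decide)))
  exact net_four (hmem 0) (hmem 3) (hmem 4) (hmem 5)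
    (hd 0 3 (by decide)) (hd 0 4 (by decide)) (hd 0 5 (by decide))
    (hd 3 4 (by decide)) (hd 3 5 (by decide)) (hd 4 5 (by decide))
    F1 (F2.trans F3) (F4.trans F5)

end Aux

/-- The net is a circular arc graph but not a proper circular arc graph, and
hence the complete signed graph whose positive subgraph is the net has no
valid drawing in the circumference. -/
theorem net_not_proper_and_no_valid_drawing :
    IsCircularArcGraph netGraph ∧
    ¬ IsProperCircularArcGraph netGraph ∧
    ¬ ∃ D : Fin 6 → ℝ,
        IsValidDrawing ⟨netGraph, netGraphᶜ, fun i j h => h.2.2 h.1⟩ D :=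
  ⟨part1, part2, part3⟩
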